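/- Let L be a real p × p matrix all of whose complex eigenvalues (roots of its characteristic polynomial over ℂ) have nonzero real part, and let Ω ∈ ℝ^m. Let V : ℝ^m → ℝ^p be a trigonometric polynomial, i.e., V(φ) = Σ_{k ∈ F} (a_k · cos⟨k, φ⟩ + b_k · sin⟨k, φ⟩) for a finite set F ⊂ ℤ^m and vectors a_k, b_k ∈ ℝ^p, where ⟨k, φ⟩ = k₁φ₁ + ⋯ + k_mφ_m. Then there exists a trigonometric polynomial Y : ℝ^m → ℝ^p (of the same form, with frequencies in F) such that for all φ ∈ ℝ^m, (fderiv ℝ Y φ)(Ω) − L · Y(φ) = V(φ). -/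

import Mathlib

open Matrix Polynomial

lemma my_eval_charpoly {n : Type*} [DecidableEq n] [Fintype n] {R : Type*} [CommRing R]
    (M : Matrix n n R) (μ : R) : M.charpoly.eval μ = (μ • (1 : Matrix n n R) - M).det := by
  rw [Matrix.charpoly, ← Polynomial.coe_evalRingHom, RingHom.map_det]
  congr 1
  ext i j
  by_cases h : i = j <;>
    simp [h, charmatrix_apply_eq, charmatrix_apply_ne, Matrix.one_apply, Matrix.smul_apply,
      Matrix.sub_apply]

lemma my_fact_lemma {p : ℕ} (c : ℂ) (M : Matrix (Fin p) (Fin p) ℂ) :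
    (c • (1 : Matrix (Fin p) (Fin p) ℂ) - M) * ((-c) • 1 - M) = M * M - (c * c) • 1 := by
  simp only [sub_mul, mul_sub, Matrix.smul_mul, Matrix.mul_smul, Matrix.one_mul, Matrix.mul_one,
    smul_smul, neg_smul, smul_neg, Matrix.mul_neg, Matrix.neg_mul, sub_neg_eq_add]
  abel

lemma my_det_ne {p : ℕ} (L : Matrix (Fin p) (Fin p) ℝ)
    (hL : ∀ μ : ℂ, (L.map (fun x : ℝ => (x : ℂ))).charpoly.IsRoot μ → μ.re ≠ 0)
    (ω : ℝ) : (L * L + (ω ^ 2) • 1).det ≠ 0 := by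
  set Lc := L.map (fun x : ℝ => (x : ℂ)) with hLc
  set c : ℂ := (ω : ℝ) * Complex.I with hc
  have key : ((L * L + (ω ^ 2) • 1).map (fun x : ℝ => (x : ℂ)))
      = (c • (1 : Matrix (Fin p) (Fin p) ℂ) - Lc) * ((-c) • 1 - Lc) := by
    rw [my_fact_lemma]
    have hcc : c * c = -((ω : ℂ) ^ 2) := by
      rw [hc]; ring_nf; rw [Complex.I_sq]; ring
    rw [hcc]
    ext i j
    by_cases h : i = j <;>
      simp [h, Matrix.add_apply, Matrix.sub_apply, Matrix.mul_apply, Matrix.smul_apply,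
        Matrix.one_apply, hLc, Matrix.map_apply] <;> push_cast <;> ring
  have h1 : Lc.charpoly.eval c ≠ 0 := fun h => hL _ h (by simp [hc])
  have h2 : Lc.charpoly.eval (-c) ≠ 0 := fun h => hL _ h (by simp [hc])
  rw [my_eval_charpoly] at h1 h2
  intro h
  have hmap := RingHom.map_det Complex.ofRealHom (L * L + (ω ^ 2) • 1)
  rw [h] at hmap
  have : ((L * L + ω ^ 2 • 1).map (fun x : ℝ => (x : ℂ))).det = 0 := by
    rw [show (L * L + ω ^ 2 • 1).map (fun x : ℝ => (x : ℂ))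
      = Complex.ofRealHom.mapMatrix (L * L + ω ^ 2 • 1) from rfl, ← hmap]
    simp
  rw [key, Matrix.det_mul] at this
  exact mul_ne_zero h1 h2 this

lemma my_solve_system {p : ℕ} (L : Matrix (Fin p) (Fin p) ℝ) (ω : ℝ)
    (hdet : (L * L + (ω ^ 2) • 1).det ≠ 0) (A B : Fin p → ℝ) :
    ∃ x y : Fin p → ℝ, ω • y - L.mulVec x = A ∧ -(ω • x) - L.mulVec y = B := by
  set T : ((Fin p → ℝ) × (Fin p → ℝ)) →ₗ[ℝ] ((Fin p → ℝ) × (Fin p → ℝ)) :=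
    { toFun := fun z => (ω • z.2 - L.mulVec z.1, -(ω • z.1) - L.mulVec z.2)
      map_add' := by
        intro z w
        simp [Matrix.mulVec_add, Prod.ext_iff, smul_add]
        constructor <;> abel
      map_smul' := by
        intro c z
        simp [Matrix.mulVec_smul, Prod.ext_iff, smul_sub, smul_neg, smul_comm c ω] } with hT
  have hMinj : Function.Injective (L * L + (ω ^ 2) • 1).mulVec := by
    apply Matrix.mulVec_injective_iff_isUnit.2
    rw [Matrix.isUnit_iff_isUnit_det]
    exact isUnit_iff_ne_zero.2 hdet
  have hinj : Function.Injective T := by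
    rw [← LinearMap.ker_eq_bot, LinearMap.ker_eq_bot']
    rintro ⟨x, y⟩ hz
    rw [Prod.ext_iff] at hz
    obtain ⟨h1, h2⟩ := hz
    have e1 : L.mulVec x = ω • y := by
      have := sub_eq_zero.1 h1; linear_combination (norm := module) -this
    have e2 : L.mulVec y = -(ω • x) := by
      have := sub_eq_zero.1 h2; linear_combination (norm := module) -this
    have key : ∀ u v : Fin p → ℝ, L.mulVec u = ω • v → L.mulVec v = -(ω • u) →
        (L * L + (ω ^ 2) • 1).mulVec u = 0 := by
      intro u v hu hv
      have : (L * L + (ω ^ 2) • 1).mulVec u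
          = L.mulVec (L.mulVec u) + ω ^ 2 • u := by
        rw [Matrix.add_mulVec, Matrix.mulVec_mulVec, Matrix.smul_mulVec,
          Matrix.one_mulVec]
      rw [this, hu, Matrix.mulVec_smul, hv]
      module
    have hx0 : x = 0 := by
      have := key x y e1 e2
      have h0 : (L * L + (ω ^ 2) • 1).mulVec 0 = 0 := Matrix.mulVec_zero _
      exact hMinj (by rw [this, h0])
    have hy0 : y = 0 := by
      have e1' : L.mulVec y = ω • (-x) := by rw [e2]; module
      have e2' : L.mulVec (-x) = -(ω • y) := by
        rw [Matrix.mulVec_neg, e1]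
      have := key y (-x) e1' e2'
      have h0 : (L * L + (ω ^ 2) • 1).mulVec 0 = 0 := Matrix.mulVec_zero _
      exact hMinj (by rw [this, h0])
    simp [hx0, hy0]
  have hsurj := (LinearMap.injective_iff_surjective).1 hinj
  obtain ⟨z, hz⟩ := hsurj (A, B)
  rw [Prod.ext_iff] at hz
  exact ⟨z.1, z.2, hz.1, hz.2⟩

lemma my_fderiv_trig (p m : ℕ) (Ω : Fin m → ℝ)
    (F : Finset (Fin m → ℤ)) (a' b' : (Fin m → ℤ) → (Fin p → ℝ)) (φ : Fin m → ℝ) :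
    (fderiv ℝ (fun ψ => ∑ k ∈ F,
      (Real.cos (∑ i, (k i : ℝ) * ψ i) • a' k + Real.sin (∑ i, (k i : ℝ) * ψ i) • b' k)) φ) Ω
    = ∑ k ∈ F,
      (((-Real.sin (∑ i, (k i : ℝ) * φ i)) * (∑ i, (k i : ℝ) * Ω i)) • a' k
        + ((Real.cos (∑ i, (k i : ℝ) * φ i)) * (∑ i, (k i : ℝ) * Ω i)) • b' k) := by
  set ℓ : (Fin m → ℤ) → ((Fin m → ℝ) →L[ℝ] ℝ) := fun k =>
    ∑ i, (k i : ℝ) • (ContinuousLinearMap.proj i : (Fin m → ℝ) →L[ℝ] ℝ) with hℓdef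
  have hℓ : ∀ k ψ, ℓ k ψ = ∑ i, (k i : ℝ) * ψ i := by
    intro k ψ
    simp [hℓdef, ContinuousLinearMap.sum_apply]
  have hder : HasFDerivAt (fun ψ => ∑ k ∈ F,
      (Real.cos (∑ i, (k i : ℝ) * ψ i) • a' k + Real.sin (∑ i, (k i : ℝ) * ψ i) • b' k))
      (∑ k ∈ F, (((-Real.sin (∑ i, (k i : ℝ) * φ i)) • ℓ k).smulRight (a' k)
        + ((Real.cos (∑ i, (k i : ℝ) * φ i)) • ℓ k).smulRight (b' k))) φ := by
    apply HasFDerivAt.fun_sum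
    intro k hk
    have hc : HasFDerivAt (fun ψ => Real.cos (∑ i, (k i : ℝ) * ψ i))
        ((-Real.sin (∑ i, (k i : ℝ) * φ i)) • ℓ k) φ := by
      have := (Real.hasDerivAt_cos ((ℓ k) φ)).comp_hasFDerivAt φ (ℓ k).hasFDerivAt
      simp only [Function.comp_def, hℓ] at this
      exact this
    have hs : HasFDerivAt (fun ψ => Real.sin (∑ i, (k i : ℝ) * ψ i))
        ((Real.cos (∑ i, (k i : ℝ) * φ i)) • ℓ k) φ := by
      have := (Real.hasDerivAt_sin ((ℓ k) φ)).comp_hasFDerivAt φ (ℓ k).hasFDerivAt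
      simp only [Function.comp_def, hℓ] at this
      exact this
    exact (hc.smul_const (a' k)).add (hs.smul_const (b' k))
  rw [hder.fderiv]
  simp only [ContinuousLinearMap.sum_apply, ContinuousLinearMap.add_apply,
    ContinuousLinearMap.smulRight_apply, ContinuousLinearMap.smul_apply, hℓ, smul_eq_mul]

/-- Solvability of the normal homological equation `(∂_Ω − L)Y = V` for
hyperbolic `L` and trigonometric-polynomial right-hand side `V` with frequencies in a
finite set `F ⊂ ℤ^m`; the solution `Y` is a trigonometric polynomial with frequencies
in `F` as well. -/
theorem normal_homological_equation_solvable
    (p m : ℕ)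
    (L : Matrix (Fin p) (Fin p) ℝ)
    (hL : ∀ μ : ℂ, (L.map (fun x : ℝ => (x : ℂ))).charpoly.IsRoot μ → μ.re ≠ 0)
    (Ω : Fin m → ℝ)
    (F : Finset (Fin m → ℤ))
    (a b : (Fin m → ℤ) → (Fin p → ℝ))
    (V : (Fin m → ℝ) → (Fin p → ℝ))
    (hV : ∀ φ, V φ = ∑ k ∈ F,
      (Real.cos (∑ i, (k i : ℝ) * φ i) • a k + Real.sin (∑ i, (k i : ℝ) * φ i) • b k)) :
    ∃ a' b' : (Fin m → ℤ) → (Fin p → ℝ),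
      ∀ φ : Fin m → ℝ,
        (fderiv ℝ (fun ψ => ∑ k ∈ F,
          (Real.cos (∑ i, (k i : ℝ) * ψ i) • a' k + Real.sin (∑ i, (k i : ℝ) * ψ i) • b' k)) φ) Ω
        - L.mulVec (∑ k ∈ F,
          (Real.cos (∑ i, (k i : ℝ) * φ i) • a' k + Real.sin (∑ i, (k i : ℝ) * φ i) • b' k))
        = V φ := by
  choose x y hx hy using fun k : Fin m → ℤ =>
    my_solve_system L (∑ i, (k i : ℝ) * Ω i)
      (my_det_ne L hL (∑ i, (k i : ℝ) * Ω i)) (a k) (b k)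
  refine ⟨x, y, fun φ => ?_⟩
  rw [my_fderiv_trig, hV]
  have hsum : L.mulVec (∑ k ∈ F,
      (Real.cos (∑ i, (k i : ℝ) * φ i) • x k + Real.sin (∑ i, (k i : ℝ) * φ i) • y k))
      = ∑ k ∈ F, L.mulVec
      (Real.cos (∑ i, (k i : ℝ) * φ i) • x k + Real.sin (∑ i, (k i : ℝ) * φ i) • y k) := by
    exact map_sum L.mulVecLin _ _
  rw [hsum, ← Finset.sum_sub_distrib]
  refine Finset.sum_congr rfl fun k hk => ?_
  rw [← hx k, ← hy k, Matrix.mulVec_add, Matrix.mulVec_smul, Matrix.mulVec_smul]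
  module
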